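/- arXiv:2410.15848 — 10 statements merged into one kernel-verified Lean document; each statement's English description precedes it below -/
import Mathlib

section
/- Let g be an element of an admissible group w.r.t. a prefix P (so both g and g⁻¹ are admissible) and let s ∈ S(P). Then for every y ∈ Y and all σ, σ' ∈ A(X) that agree on D_y, [ev_y]_{g(g⁻¹(σ)_s)} = [ev_y]_{g(g⁻¹(σ')_s)}; consequently, there exists a unique interpretation t ∈ S(P) such that σ_t = g(g⁻¹(σ)_s) for all σ ∈ A(X). (This shows that g(s) is well-defined.) -/
namespace DQBF

/-- Boolean formulas over variables `α`, modeled by their truth functions. -/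
abbrev BF (α : Type*) := (α → Bool) → Bool

/-- The evaluation formula of a variable `v`. -/
def ev {α : Type*} (v : α) : BF α := fun τ => τ v

/-- The assignment `g(σ)` induced by `g : BF(V) → BF(V)` and `σ ∈ A(V)`:
`g(σ)(v) = [g(ev_v)]_σ`. -/
def pushA {α : Type*} (g : BF α → BF α) (σ : α → Bool) : α → Bool :=
  fun v => g (ev v) σ

/-- `g` preserves propositional satisfiability: `[g(φ)]_σ = [φ]_{g(σ)}`. -/
def PreservesSat {α : Type*} (g : BF α → BF α) : Prop :=
  ∀ (φ : BF α) (σ : α → Bool), g φ σ = φ (pushA g σ)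

/-- A formula `F` depends only on the variables in `S`. -/
def DependsOnlyOn {α : Type*} (F : BF α) (S : Set α) : Prop :=
  ∀ τ τ' : α → Bool, (∀ v ∈ S, τ v = τ' v) → F τ = F τ'

variable {X Y : Type*}

/-- Extension of an assignment of the universal variables to all of `V = X ⊕ Y`
(with junk value `false` on `Y`). -/
def extendX (σ : X → Bool) : X ⊕ Y → Bool := Sum.elim σ fun _ => false

/-- The assignment `g(σ) ∈ A(X)` for `σ ∈ A(X)` and admissible `g`:
`g(σ)(x) = [g(ev_x)]_σ` (well-defined via any extension since `g(ev_x)` depends only on `X`). -/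
def pushX (g : BF (X ⊕ Y) → BF (X ⊕ Y)) (σ : X → Bool) : X → Bool :=
  fun x => g (ev (Sum.inl x)) (extendX σ)

/-- An interpretation for the prefix with dependency sets `D`: a family of Skolem
functions, each depending only on its dependency set. -/
structure Interp (D : Y → Set X) where
  sk : Y → BF X
  dep : ∀ y : Y, ∀ σ σ' : X → Bool, (∀ x ∈ D y, σ x = σ' x) → sk y σ = sk y σ'

/-- The induced assignment `σ_s ∈ A(X ⊕ Y)` of `σ ∈ A(X)` and `s ∈ S(P)`. -/
def induced {D : Y → Set X} (σ : X → Bool) (s : Interp D) : X ⊕ Y → Bool :=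
  Sum.elim σ fun y => s.sk y σ

/-- Truth value of the DQBF `P.φ` under the interpretation `s`:
`[P.φ]_s = ⊤` iff `[φ]_{σ_s} = ⊤` for every `σ ∈ A(X)`. -/
def Truth {D : Y → Set X} (φ : BF (X ⊕ Y)) (s : Interp D) : Prop :=
  ∀ σ : X → Bool, φ (induced σ s) = true

/-- A formula `F ∈ BF(Y)` depends on the universal variable `x` if it depends
semantically on some `y ∈ Y` with `x ∈ D_y`. -/
def DependsOn (D : Y → Set X) (F : BF (X ⊕ Y)) (x : X) : Prop :=
  ∃ y : Y, x ∈ D y ∧ ∃ τ τ' : X ⊕ Y → Bool,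
    (∀ v, v ≠ Sum.inr y → τ v = τ' v) ∧ F τ ≠ F τ'

/-- `g`, together with its two-sided inverse `g'`, is admissible w.r.t. the prefix `D`. -/
structure AdmissiblePair (D : Y → Set X) (g g' : BF (X ⊕ Y) → BF (X ⊕ Y)) : Prop where
  left_inv : ∀ φ, g' (g φ) = φ
  right_inv : ∀ φ, g (g' φ) = φ
  presSat : PreservesSat g
  varX : ∀ x : X, DependsOnlyOn (g (ev (Sum.inl x))) (Set.range Sum.inl)
  varY : ∀ y : Y, DependsOnlyOn (g (ev (Sum.inr y))) (Set.range Sum.inr)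
  depCond : ∀ (y : Y) (x : X), DependsOn D (g (ev (Sum.inr y))) x →
    DependsOnlyOn (g' (ev (Sum.inl x))) (Sum.inl '' D y)

/-- An admissible group w.r.t. the prefix `D`: a group (under composition) of
admissible functions. -/
structure AdmissibleGroup (D : Y → Set X) (G : Set (BF (X ⊕ Y) → BF (X ⊕ Y))) : Prop where
  id_mem : id ∈ G
  comp_mem : ∀ g ∈ G, ∀ h ∈ G, (g ∘ h) ∈ G
  inv_mem : ∀ g ∈ G, ∃ g' ∈ G, AdmissiblePair D g g'

/-- The associated group `G_sem` of a syntactic group `G`: all bijections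
`f : S(P) → S(P)` such that for all `s` and `σ` there is `g ∈ G` with
`g(σ)_{f(s)} = g(σ_s)`. -/
def Associated (D : Y → Set X) (G : Set (BF (X ⊕ Y) → BF (X ⊕ Y))) :
    Set (Interp D → Interp D) :=
  {f | Function.Bijective f ∧
    ∀ (s : Interp D) (σ : X → Bool), ∃ g ∈ G,
      induced (pushX g σ) (f s) = pushA g (induced σ s)}

/-- A group of bijections of `S(P)`. -/
structure BijGroup {D : Y → Set X} (G : Set (Interp D → Interp D)) : Prop where
  bij : ∀ f ∈ G, Function.Bijective f
  id_mem : id ∈ G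
  comp_mem : ∀ f ∈ G, ∀ h ∈ G, (f ∘ h) ∈ G
  inv_mem : ∀ f ∈ G, ∀ f', Function.LeftInverse f' f → Function.RightInverse f' f → f' ∈ G

/-- `ψ` is a conjunctive symmetry breaker for the group `G` of bijections of `S(P)`. -/
def ConjSymBreaker {D : Y → Set X} (G : Set (Interp D → Interp D)) (ψ : BF (X ⊕ Y)) : Prop :=
  ∀ s : Interp D, ∃ f ∈ G, Truth ψ (f s)

/-- If `τ` and `τ'` differ only at variables on which `F` does not semantically
depend, then `F τ = F τ'`. -/
lemma eval_eq_of_indep {α : Type*} [Fintype α] [DecidableEq α] (F : BF α) :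
    ∀ (n : ℕ) (τ τ' : α → Bool),
      (Finset.univ.filter fun v => τ v ≠ τ' v).card ≤ n →
      (∀ v, τ v ≠ τ' v → ∀ ρ ρ' : α → Bool, (∀ w, w ≠ v → ρ w = ρ' w) → F ρ = F ρ') →
      F τ = F τ' := by
  intro n
  induction n with
  | zero =>
    intro τ τ' hcard _
    have hτ : τ = τ' := by
      funext v
      by_contra hv
      have hmem : v ∈ Finset.univ.filter fun v => τ v ≠ τ' v := by
        simp [hv]
      have := Finset.card_pos.mpr ⟨v, hmem⟩
      omega
    rw [hτ]
  | succ n ih =>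
    intro τ τ' hcard h
    by_cases hτ : τ = τ'
    · rw [hτ]
    · obtain ⟨v, hv⟩ : ∃ v, τ v ≠ τ' v := by
        by_contra hc
        push_neg at hc
        exact hτ (funext hc)
      set τ'' := Function.update τ v (τ' v) with hτ''
      have h1 : F τ = F τ'' :=
        h v hv τ τ'' (fun w hw => (Function.update_of_ne hw _ _).symm)
      have hsub : (Finset.univ.filter fun w => τ'' w ≠ τ' w) ⊆
          (Finset.univ.filter fun w => τ w ≠ τ' w).erase v := by
        intro w hw
        simp only [Finset.mem_filter, Finset.mem_univ, true_and] at hw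
        have hwv : w ≠ v := by
          intro he; subst he
          simp [hτ'', Function.update_self] at hw
        refine Finset.mem_erase.mpr ⟨hwv, ?_⟩
        simp only [Finset.mem_filter, Finset.mem_univ, true_and]
        rwa [hτ'', Function.update_of_ne hwv] at hw
      have hcard' : (Finset.univ.filter fun w => τ'' w ≠ τ' w).card ≤ n := by
        have hvmem : v ∈ Finset.univ.filter fun w => τ w ≠ τ' w := by simp [hv]
        have := Finset.card_le_card hsub
        have := Finset.card_erase_of_mem hvmem
        omega
      have h2 : F τ'' = F τ' := by
        refine ih τ'' τ' hcard' (fun w hw => ?_)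
        have hwv : w ≠ v := by
          intro he; subst he
          simp [hτ'', Function.update_self] at hw
        rw [hτ'', Function.update_of_ne hwv] at hw
        exact h w hw
      rw [h1, h2]

/-- well-definedness of `g(s)` for `g` in an admissible group. -/
theorem stmt_5 {X Y : Type*} [Fintype X] [Fintype Y] (D : Y → Set X)
    (G : Set (BF (X ⊕ Y) → BF (X ⊕ Y))) (hG : AdmissibleGroup D G)
    (g g' : BF (X ⊕ Y) → BF (X ⊕ Y)) (hg : g ∈ G) (hg' : g' ∈ G)
    (hpair : AdmissiblePair D g g') (hpair' : AdmissiblePair D g' g)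
    (s : Interp D) :
    (∀ (y : Y) (σ σ' : X → Bool), (∀ x ∈ D y, σ x = σ' x) →
      pushA g (induced (pushX g' σ) s) (Sum.inr y) =
        pushA g (induced (pushX g' σ') s) (Sum.inr y)) ∧
    (∃! t : Interp D, ∀ σ : X → Bool,
      induced σ t = pushA g (induced (pushX g' σ) s)) :=  by
  classical
  have key : ∀ (y : Y) (σ σ' : X → Bool), (∀ x ∈ D y, σ x = σ' x) →
      pushA g (induced (pushX g' σ) s) (Sum.inr y) =
        pushA g (induced (pushX g' σ') s) (Sum.inr y) := by
    intro y σ σ' hagree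
    show g (ev (Sum.inr y)) (induced (pushX g' σ) s) =
      g (ev (Sum.inr y)) (induced (pushX g' σ') s)
    refine eval_eq_of_indep (g (ev (Sum.inr y)))
      ((Finset.univ.filter fun v => induced (pushX g' σ) s v ≠ induced (pushX g' σ') s v).card)
      _ _ le_rfl ?_
    intro v hv ρ ρ' hρ
    cases v with
    | inl x =>
      refine hpair.varY y ρ ρ' ?_
      rintro w ⟨y', rfl⟩
      exact hρ _ (by simp)
    | inr y' =>
      by_contra hFF
      have hpush : ∀ x ∈ D y', pushX g' σ x = pushX g' σ' x := by
        intro x hx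
        have hdep : DependsOn D (g (ev (Sum.inr y))) x := ⟨y', hx, ρ, ρ', hρ, hFF⟩
        refine hpair.depCond y x hdep (extendX σ) (extendX σ') ?_
        rintro w ⟨x', hx', rfl⟩
        simp [extendX, hagree x' hx']
      have hsk : s.sk y' (pushX g' σ) = s.sk y' (pushX g' σ') := s.dep y' _ _ hpush
      simp only [induced, Sum.elim_inr] at hv
      exact hv hsk
  have hinl : ∀ (σ : X → Bool) (x : X), pushA g (induced (pushX g' σ) s) (Sum.inl x) = σ x := by
    intro σ x
    have h1 : g (ev (Sum.inl x)) (pushA g' (extendX σ)) = σ x := by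
      have h := hpair'.presSat (g (ev (Sum.inl x))) (extendX σ)
      rw [hpair.left_inv] at h
      simpa [ev, extendX] using h.symm
    have h2 : g (ev (Sum.inl x)) (induced (pushX g' σ) s) =
        g (ev (Sum.inl x)) (pushA g' (extendX σ)) := by
      apply hpair.varX x
      rintro w ⟨x', rfl⟩
      simp [induced, pushX, pushA]
    exact h2.trans h1
  refine ⟨key, ⟨⟨fun y σ => pushA g (induced (pushX g' σ) s) (Sum.inr y),
      fun y σ σ' h => key y σ σ' h⟩, ?_, ?_⟩⟩
  · intro σ
    funext v
    cases v with
    | inl x => simpa [induced] using (hinl σ x).symm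
    | inr y => rfl
  · rintro ⟨sk', dep'⟩ ht'
    simp only [Interp.mk.injEq]
    funext y σ
    have := congrFun (ht' σ) (Sum.inr y)
    simpa [induced] using this


end DQBF
end

section
/- Let G_syn be an admissible group w.r.t. a prefix P and let g ∈ G_syn. Then the map S(P) → S(P), s ↦ g(s), is a bijection (with inverse s ↦ g⁻¹(s)) and satisfies g(σ)_{g(s)} = g(σ_s) for all s ∈ S(P) and all σ ∈ A(X). -/
namespace DQBF

variable {X Y : Type*}

/-- `s ↦ g(s)` is a bijection (with inverse `s ↦ g⁻¹(s)`) satisfying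
`g(σ)_{g(s)} = g(σ_s)`. -/
theorem stmt_6 {X Y : Type*} [Fintype X] [Fintype Y] (D : Y → Set X)
    (G : Set (BF (X ⊕ Y) → BF (X ⊕ Y))) (hG : AdmissibleGroup D G)
    (g g' : BF (X ⊕ Y) → BF (X ⊕ Y)) (hg : g ∈ G) (hg' : g' ∈ G)
    (hpair : AdmissiblePair D g g') (hpair' : AdmissiblePair D g' g)
    (gs gs' : Interp D → Interp D)
    (hgs : ∀ (s : Interp D) (σ : X → Bool),
      induced σ (gs s) = pushA g (induced (pushX g' σ) s))
    (hgs' : ∀ (s : Interp D) (σ : X → Bool),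
      induced σ (gs' s) = pushA g' (induced (pushX g σ) s)) :
    Function.Bijective gs ∧
    Function.LeftInverse gs' gs ∧ Function.RightInverse gs' gs ∧
    (∀ (s : Interp D) (σ : X → Bool),
      induced (pushX g σ) (gs s) = pushA g (induced σ s)) := by

  -- auxiliary facts
  have pushA_inv : ∀ σ : X ⊕ Y → Bool, pushA g' (pushA g σ) = σ := by
    intro σ; funext v
    have h1 := hpair.presSat (g' (ev v)) σ
    rw [hpair.right_inv] at h1
    exact h1.symm
  have pushA_inv' : ∀ σ : X ⊕ Y → Bool, pushA g (pushA g' σ) = σ := by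
    intro σ; funext v
    have h1 := hpair'.presSat (g (ev v)) σ
    rw [hpair.left_inv] at h1
    exact h1.symm
  have pushX_agree : ∀ σ : X → Bool, ∀ v ∈ Set.range (Sum.inl : X → X ⊕ Y),
      extendX (Y := Y) (pushX g σ) v = pushA g (extendX σ) v := by
    rintro σ v ⟨x, rfl⟩; rfl
  have pushX_agree' : ∀ σ : X → Bool, ∀ v ∈ Set.range (Sum.inl : X → X ⊕ Y),
      extendX (Y := Y) (pushX g' σ) v = pushA g' (extendX σ) v := by
    rintro σ v ⟨x, rfl⟩; rfl
  have pushX_inv : ∀ σ : X → Bool, pushX g' (pushX g σ) = σ := by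
    intro σ; funext x
    have hd := hpair'.varX x (extendX (pushX g σ)) (pushA g (extendX σ)) (pushX_agree σ)
    have h1 := hpair.presSat (g' (ev (Sum.inl x))) (extendX σ)
    rw [hpair.right_inv] at h1
    calc pushX g' (pushX g σ) x = g' (ev (Sum.inl x)) (extendX (pushX g σ)) := rfl
      _ = g' (ev (Sum.inl x)) (pushA g (extendX σ)) := hd
      _ = σ x := h1.symm
  have pushX_inv' : ∀ σ : X → Bool, pushX g (pushX g' σ) = σ := by
    intro σ; funext x
    have hd := hpair.varX x (extendX (pushX g' σ)) (pushA g' (extendX σ)) (pushX_agree' σ)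
    have h1 := hpair'.presSat (g (ev (Sum.inl x))) (extendX σ)
    rw [hpair.left_inv] at h1
    calc pushX g (pushX g' σ) x = g (ev (Sum.inl x)) (extendX (pushX g' σ)) := rfl
      _ = g (ev (Sum.inl x)) (pushA g' (extendX σ)) := hd
      _ = σ x := h1.symm
  have ext : ∀ s t : Interp D, (∀ σ : X → Bool, induced σ s = induced σ t) → s = t := by
    intro s t h
    cases s with | mk sk dep => cases t with | mk sk' dep' =>
      simp only [Interp.mk.injEq]
      funext y σ
      have := congrFun (h σ) (Sum.inr y)
      simpa [induced] using this
  have li : Function.LeftInverse gs' gs := by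
    intro s
    apply ext
    intro σ
    rw [hgs', hgs, pushX_inv, pushA_inv]
  have ri : Function.RightInverse gs' gs := by
    intro s
    apply ext
    intro σ
    rw [hgs, hgs', pushX_inv', pushA_inv']
  refine ⟨⟨li.injective, ri.surjective⟩, li, ri, ?_⟩
  intro s σ
  rw [hgs, pushX_inv]


end DQBF
end

section
/- Let P.φ be a DQBF and let G_syn be an admissible group w.r.t. P. Then for every g ∈ G_syn and every interpretation s ∈ S(P), [P.g(φ)]_s = [P.φ]_{g(s)}. In particular, P.φ is true if and only if P.g(φ) is true, and s is a model of P.g(φ) if and only if g(s) is a model of P.φ. -/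
namespace DQBF

variable {X Y : Type*}

/-- Hybrid argument: if `F` is insensitive to each coordinate in a finite set
covering all coordinates where `τ` and `τ'` differ, then `F τ = F τ'`. -/
lemma indep_finset_eq {V : Type*} (F : BF V) (τ' : V → Bool) (s : Finset V)
    (hind : ∀ v ∈ s, ∀ ρ ρ' : V → Bool, (∀ w, w ≠ v → ρ w = ρ' w) → F ρ = F ρ') :
    ∀ τ : V → Bool, (∀ v, τ v ≠ τ' v → v ∈ s) → F τ = F τ' := by
  classical
  induction s using Finset.induction_on with
  | empty =>
    intro τ hs
    have : τ = τ' := funext fun v => by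
      by_contra h; exact absurd (hs v h) (Finset.notMem_empty v)
    rw [this]
  | @insert a s ha ih =>
    intro τ hs
    set τ₂ := Function.update τ a (τ' a) with hτ₂
    have h1 : F τ = F τ₂ :=
      hind a (Finset.mem_insert_self a s) τ τ₂
        (fun w hw => (Function.update_of_ne hw _ _).symm)
    have h2 : F τ₂ = F τ' := by
      refine ih (fun v hv ρ ρ' h => hind v (Finset.mem_insert_of_mem hv) ρ ρ' h) τ₂ ?_
      intro v hv
      rcases eq_or_ne v a with rfl | hne
      · exact absurd (Function.update_self v (τ' v) τ) hv
      · have : τ v ≠ τ' v := by rwa [hτ₂, Function.update_of_ne hne] at hv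
        exact (Finset.mem_insert.mp (hs v this)).resolve_left hne
    rw [h1, h2]

/-- If `F τ ≠ F τ'`, then `F` semantically depends on some coordinate where
`τ` and `τ'` differ. -/
lemma exists_dep_coord {V : Type*} [Fintype V] (F : BF V) (τ τ' : V → Bool)
    (h : F τ ≠ F τ') :
    ∃ v, τ v ≠ τ' v ∧ ∃ ρ ρ' : V → Bool, (∀ w, w ≠ v → ρ w = ρ' w) ∧ F ρ ≠ F ρ' := by
  classical
  by_contra hc
  push_neg at hc
  refine h (indep_finset_eq F τ' (Finset.univ.filter (fun v => τ v ≠ τ' v)) ?_ τ ?_)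
  · intro v hv ρ ρ' hρ
    exact hc v (Finset.mem_filter.mp hv).2 ρ ρ' hρ
  · intro v hv
    exact Finset.mem_filter.mpr ⟨Finset.mem_univ v, hv⟩

/-- `[P.g(φ)]_s = [P.φ]_{g(s)}`; in particular `P.φ` is true iff
`P.g(φ)` is true, and `s` is a model of `P.g(φ)` iff `g(s)` is a model of `P.φ`. -/
theorem stmt_7 {X Y : Type*} [Fintype X] [Fintype Y] (D : Y → Set X)
    (G : Set (BF (X ⊕ Y) → BF (X ⊕ Y))) (hG : AdmissibleGroup D G)
    (g g' : BF (X ⊕ Y) → BF (X ⊕ Y)) (hg : g ∈ G) (hg' : g' ∈ G)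
    (hpair : AdmissiblePair D g g')
    (gs : Interp D → Interp D)
    (hgs : ∀ (s : Interp D) (σ : X → Bool),
      induced σ (gs s) = pushA g (induced (pushX g' σ) s))
    (φ : BF (X ⊕ Y)) :
    (∀ s : Interp D, Truth (g φ) s ↔ Truth φ (gs s)) ∧
    ((∃ s : Interp D, Truth φ s) ↔ (∃ s : Interp D, Truth (g φ) s)) := by
  classical
  -- obtain an admissible pair for g', and identify its inverse with g
  obtain ⟨g'', hg''G, pair2⟩ := hG.inv_mem g' hg'
  have hgg'' : ∀ ψ, g'' ψ = g ψ := by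
    intro ψ
    have := pair2.left_inv (g ψ)
    rwa [hpair.left_inv ψ] at this
  -- pushA inverses
  have pushAinv1 : ∀ τ : X ⊕ Y → Bool, pushA g' (pushA g τ) = τ := by
    intro τ; funext v
    have h1 := hpair.presSat (g' (ev v)) τ
    rw [hpair.right_inv (ev v)] at h1
    exact h1.symm
  have pushAinv2 : ∀ τ : X ⊕ Y → Bool, pushA g (pushA g' τ) = τ := by
    intro τ; funext v
    have h1 := pair2.presSat (g (ev v)) τ
    rw [hpair.left_inv (ev v)] at h1
    exact h1.symm
  -- pushX against any extension
  have hpushX : ∀ (h : BF (X ⊕ Y) → BF (X ⊕ Y)),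
      (∀ x : X, DependsOnlyOn (h (ev (Sum.inl x))) (Set.range Sum.inl)) →
      ∀ (σ : X → Bool) (τ : X ⊕ Y → Bool), (∀ x, τ (Sum.inl x) = σ x) →
      ∀ x, pushX h σ x = pushA h τ (Sum.inl x) := by
    intro h hvar σ τ hτ x
    exact hvar x (extendX σ) τ (by rintro v ⟨x', rfl⟩; exact (hτ x').symm)
  -- pushX g' ∘ pushX g = id
  have hinv1 : ∀ σ : X → Bool, pushX g' (pushX g σ) = σ := by
    intro σ; funext x
    have h1 : ∀ x', extendX (Y := Y) (pushX g σ) (Sum.inl x') =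
        pushA g (extendX σ) (Sum.inl x') := by
      intro x'
      exact hpushX g hpair.varX σ (extendX σ) (fun _ => rfl) x'
    have h2 := hpushX g' pair2.varX (pushX g σ) (pushA g (extendX σ)) h1 x
    rw [pushAinv1 (extendX σ)] at h2
    exact h2
  -- Part 1
  have part1 : ∀ s : Interp D, Truth (g φ) s ↔ Truth φ (gs s) := by
    intro s
    have key : ∀ σ : X → Bool, g φ (induced (pushX g' σ) s) = φ (induced σ (gs s)) := by
      intro σ
      rw [hgs s σ, hpair.presSat φ (induced (pushX g' σ) s)]
    constructor
    · intro hT σ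
      rw [← key σ]
      exact hT (pushX g' σ)
    · intro hT σ
      have h1 : g φ (induced (pushX g' (pushX g σ)) s) = true := by
        rw [key (pushX g σ)]
        exact hT (pushX g σ)
      rwa [hinv1 σ] at h1
  refine ⟨part1, ?_, ?_⟩
  · -- P.φ true → P.g(φ) true : construct the interpretation directly
    rintro ⟨s, hs⟩
    -- the candidate Skolem functions
    have hdep : ∀ (y : Y) (σ σ' : X → Bool), (∀ x ∈ D y, σ x = σ' x) →
        g' (ev (Sum.inr y)) (induced (pushX g σ) s) =
        g' (ev (Sum.inr y)) (induced (pushX g σ') s) := by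
      intro y σ σ' hσ
      by_contra hne
      obtain ⟨v, hv1, ρ, ρ', hρ, hFρ⟩ :=
        exists_dep_coord (g' (ev (Sum.inr y))) _ _ hne
      cases v with
      | inl x =>
        exact hFρ (pair2.varY y ρ ρ'
          (by rintro w ⟨y', rfl⟩; exact hρ _ (by simp)))
      | inr y' =>
        -- the Y-coordinate y' differs, so some x ∈ D y' has pushX g σ x ≠ pushX g σ' x
        have hsk : s.sk y' (pushX g σ) ≠ s.sk y' (pushX g σ') := hv1
        have hx : ∃ x ∈ D y', pushX g σ x ≠ pushX g σ' x := by
          by_contra hall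
          push_neg at hall
          exact hsk (s.dep y' _ _ (fun x hx => by
            by_contra hne'
            exact hne' (hall x hx)))
        obtain ⟨x, hxD, hxne⟩ := hx
        -- g' (ev (inr y)) depends on x
        have hDep : DependsOn D (g' (ev (Sum.inr y))) x :=
          ⟨y', hxD, ρ, ρ', hρ, hFρ⟩
        have hdo : DependsOnlyOn (g (ev (Sum.inl x))) (Sum.inl '' D y) := by
          have := pair2.depCond y x hDep
          rwa [hgg''] at this
        exact hxne (hdo (extendX σ) (extendX σ')
          (by rintro w ⟨x', hx', rfl⟩; exact hσ x' hx'))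
    refine ⟨⟨fun y σ => g' (ev (Sum.inr y)) (induced (pushX g σ) s), hdep⟩, ?_⟩
    intro σ
    set t : Interp D := ⟨fun y σ => g' (ev (Sum.inr y)) (induced (pushX g σ) s), hdep⟩
    have hkey : pushA g (induced σ t) = induced (pushX g σ) s := by
      funext v
      cases v with
      | inl x =>
        have h1 : pushX g σ x = pushA g (induced σ t) (Sum.inl x) :=
          hpushX g hpair.varX σ (induced σ t) (fun _ => rfl) x
        exact h1.symm
      | inr y =>
        have h1 : pushA g (induced σ t) (Sum.inr y) =
            pushA g (pushA g' (induced (pushX g σ) s)) (Sum.inr y) := by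
          exact hpair.varY y _ _ (by rintro w ⟨y', rfl⟩; rfl)
        rw [h1, pushAinv2]
    rw [hpair.presSat φ (induced σ t), hkey]
    exact hs (pushX g σ)
  · rintro ⟨s, hs⟩
    exact ⟨gs s, (part1 s).mp hs⟩

end DQBF
end

section
/- Let G_syn be an admissible group w.r.t. a prefix P. Then for every g ∈ G_syn, the map S(P) → S(P), s ↦ g(s), belongs to the associated group of G_syn. -/
namespace DQBF

variable {X Y : Type*}

lemma pushX_cancel {X Y : Type*} (g g' : BF (X ⊕ Y) → BF (X ⊕ Y))
    (hvar : ∀ x : X, DependsOnlyOn (g' (ev (Sum.inl x))) (Set.range Sum.inl))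
    (hps : PreservesSat g) (hinv : ∀ φ, g (g' φ) = φ) (σ : X → Bool) :
    pushX g' (pushX g σ) = σ := by
  funext x
  have hagree : ∀ v ∈ Set.range (Sum.inl : X → X ⊕ Y),
      extendX (Y := Y) (pushX g σ) v = pushA g (extendX σ) v := by
    rintro v ⟨x', rfl⟩
    rfl
  have h1 : pushX g' (pushX g σ) x = g' (ev (Sum.inl x)) (pushA g (extendX σ)) :=
    hvar x _ _ hagree
  have h2 : g (g' (ev (Sum.inl x))) (extendX σ)
      = g' (ev (Sum.inl x)) (pushA g (extendX σ)) := hps _ _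
  rw [hinv] at h2
  rw [h1, ← h2]
  rfl

lemma pushA_cancel {α : Type*} (g g' : BF α → BF α)
    (hps : PreservesSat g) (hinv : ∀ φ, g (g' φ) = φ) (τ : α → Bool) :
    pushA g' (pushA g τ) = τ := by
  funext v
  have h2 : g (g' (ev v)) τ = g' (ev v) (pushA g τ) := hps _ _
  rw [hinv] at h2
  exact (h2.symm : _)

lemma Interp.ext' {X Y : Type*} {D : Y → Set X} {s t : Interp D}
    (h : s.sk = t.sk) : s = t := by
  cases s; cases t; simpa using h

/-- for `g ∈ G_syn`, the map `s ↦ g(s)` belongs to the associated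
group of `G_syn`. -/
theorem stmt_8 {X Y : Type*} [Fintype X] [Fintype Y] (D : Y → Set X)
    (G : Set (BF (X ⊕ Y) → BF (X ⊕ Y))) (hG : AdmissibleGroup D G)
    (g g' : BF (X ⊕ Y) → BF (X ⊕ Y)) (hg : g ∈ G) (hg' : g' ∈ G)
    (hpair : AdmissiblePair D g g')
    (gs : Interp D → Interp D)
    (hgs : ∀ (s : Interp D) (σ : X → Bool),
      induced σ (gs s) = pushA g (induced (pushX g' σ) s)) :
    gs ∈ Associated D G := by
  obtain ⟨g'', hg''G, hpair'⟩ := hG.inv_mem g' hg'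
  have hX1 : ∀ σ : X → Bool, pushX g' (pushX g σ) = σ :=
    pushX_cancel g g' hpair'.varX hpair.presSat hpair.right_inv
  have hA1 : ∀ τ : X ⊕ Y → Bool, pushA g' (pushA g τ) = τ :=
    pushA_cancel g g' hpair.presSat hpair.right_inv
  have hkey : ∀ (s : Interp D) (σ : X → Bool),
      induced (pushX g σ) (gs s) = pushA g (induced σ s) := by
    intro s σ
    rw [hgs s (pushX g σ), hX1 σ]
  refine ⟨?_, fun s σ => ⟨g, hg, hkey s σ⟩⟩
  have hfin : Finite (Interp D) :=
    Finite.of_injective (Interp.sk) (fun s t h => Interp.ext' h)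
  have hinj : Function.Injective gs := by
    intro s t h
    have key : ∀ ρ : X → Bool, induced ρ s = induced ρ t := by
      intro ρ
      have h1 := hkey s ρ
      have h2 := hkey t ρ
      rw [h] at h1
      have h3 : pushA g (induced ρ s) = pushA g (induced ρ t) := by
        rw [← h1, ← h2]
      have h4 := congrArg (pushA g') h3
      rwa [hA1, hA1] at h4
    apply Interp.ext'
    funext y ρ
    exact congrFun (key ρ) (Sum.inr y)
  exact Finite.injective_iff_bijective.mp hinj

end DQBF
end

section
/- Let G_syn be an admissible group w.r.t. a prefix P. Then the associated group G_sem of G_syn is a group of bijections of S(P): it contains the identity map, and it is closed under composition and under taking inverses. -/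
namespace DQBF

variable {X Y : Type*}

section Stmt9Aux

private lemma interp_sk_injective {D : Y → Set X} :
    Function.Injective (Interp.sk (D := D)) := by
  rintro ⟨a, ha⟩ ⟨b, hb⟩ h
  simpa using h

private lemma pushA_comp' {g h : BF (X ⊕ Y) → BF (X ⊕ Y)} (hg : PreservesSat g)
    (τ : X ⊕ Y → Bool) : pushA (g ∘ h) τ = pushA h (pushA g τ) := by
  funext v
  exact hg (h (ev v)) τ

private lemma pushA_inl' {g : BF (X ⊕ Y) → BF (X ⊕ Y)}
    (hvx : ∀ x : X, DependsOnlyOn (g (ev (Sum.inl x))) (Set.range Sum.inl))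
    {σ : X → Bool} {τ : X ⊕ Y → Bool} (hτ : ∀ x, τ (Sum.inl x) = σ x) (x : X) :
    pushA g τ (Sum.inl x) = pushX g σ x := by
  exact hvx x τ (extendX σ) (by rintro v ⟨x', rfl⟩; simp [extendX, hτ])

private lemma pushX_comp' {g h : BF (X ⊕ Y) → BF (X ⊕ Y)} (hg : PreservesSat g)
    (hvh : ∀ x : X, DependsOnlyOn (h (ev (Sum.inl x))) (Set.range Sum.inl))
    (σ : X → Bool) : pushX (g ∘ h) σ = pushX h (pushX g σ) := by
  funext x
  have h1 : pushX (g ∘ h) σ x = h (ev (Sum.inl x)) (pushA g (extendX σ)) :=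
    hg (h (ev (Sum.inl x))) (extendX σ)
  rw [h1]
  exact hvh x _ (extendX (pushX g σ)) (by rintro v ⟨x', rfl⟩; rfl)

private lemma mem_presSat {D : Y → Set X} {G : Set (BF (X ⊕ Y) → BF (X ⊕ Y))}
    (hG : AdmissibleGroup D G) {g} (hg : g ∈ G) : PreservesSat g := by
  obtain ⟨g', -, hp⟩ := hG.inv_mem g hg
  exact hp.presSat

private lemma mem_varX {D : Y → Set X} {G : Set (BF (X ⊕ Y) → BF (X ⊕ Y))}
    (hG : AdmissibleGroup D G) {g} (hg : g ∈ G) :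
    ∀ x : X, DependsOnlyOn (g (ev (Sum.inl x))) (Set.range Sum.inl) := by
  obtain ⟨g', -, hp⟩ := hG.inv_mem g hg
  exact hp.varX

private lemma mem_inv' {D : Y → Set X} {G : Set (BF (X ⊕ Y) → BF (X ⊕ Y))}
    (hG : AdmissibleGroup D G) {g} (hg : g ∈ G) :
    ∃ g' ∈ G, ∀ ω : X ⊕ Y → Bool, pushA g' (pushA g ω) = ω := by
  obtain ⟨g', hg', hp⟩ := hG.inv_mem g hg
  refine ⟨g', hg', fun ω => ?_⟩
  have h1 : pushA (g ∘ g') ω = pushA g' (pushA g ω) := pushA_comp' hp.presSat ω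
  rw [← h1]
  funext v
  show (g (g' (ev v))) ω = ω v
  rw [hp.right_inv]
  rfl

/-- Orbit relation of the group `G` acting on total assignments. -/
private def Rel (G : Set (BF (X ⊕ Y) → BF (X ⊕ Y))) (ω ω' : X ⊕ Y → Bool) : Prop :=
  ∃ g ∈ G, pushA g ω = ω'

private lemma rel_refl {D : Y → Set X} {G : Set (BF (X ⊕ Y) → BF (X ⊕ Y))}
    (hG : AdmissibleGroup D G) (ω : X ⊕ Y → Bool) : Rel G ω ω :=
  ⟨id, hG.id_mem, rfl⟩

private lemma rel_trans {D : Y → Set X} {G : Set (BF (X ⊕ Y) → BF (X ⊕ Y))}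
    (hG : AdmissibleGroup D G) {ω ω' ω'' : X ⊕ Y → Bool}
    (h1 : Rel G ω ω') (h2 : Rel G ω' ω'') : Rel G ω ω'' := by
  obtain ⟨g, hg, he⟩ := h1
  obtain ⟨h, hh, he'⟩ := h2
  exact ⟨g ∘ h, hG.comp_mem g hg h hh,
    by rw [pushA_comp' (mem_presSat hG hg), he, he']⟩

private lemma meets_step {D : Y → Set X} {G : Set (BF (X ⊕ Y) → BF (X ⊕ Y))}
    (hG : AdmissibleGroup D G) {f : Interp D → Interp D}
    (hf : ∀ (s : Interp D) (σ : X → Bool), ∃ g ∈ G,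
      induced (pushX g σ) (f s) = pushA g (induced σ s))
    (ω : X ⊕ Y → Bool) (s : Interp D)
    (h : ∃ σ, Rel G ω (induced σ s)) : ∃ σ, Rel G ω (induced σ (f s)) := by
  obtain ⟨σ, hrel⟩ := h
  obtain ⟨g, hg, he⟩ := hf s σ
  exact ⟨pushX g σ, rel_trans hG hrel ⟨g, hg, he.symm⟩⟩

private lemma inv_meets {X Y : Type*} [Fintype X] [Fintype Y] {D : Y → Set X}
    {G : Set (BF (X ⊕ Y) → BF (X ⊕ Y))} (hG : AdmissibleGroup D G)
    {f f' : Interp D → Interp D} (hbij : Function.Bijective f)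
    (hf : ∀ (s : Interp D) (σ : X → Bool), ∃ g ∈ G,
      induced (pushX g σ) (f s) = pushA g (induced σ s))
    (hli : Function.LeftInverse f' f)
    (t : Interp D) (ω : X ⊕ Y → Bool) (h : ∃ σ, Rel G ω (induced σ t)) :
    ∃ σ, Rel G ω (induced σ (f' t)) := by
  classical
  have hfin : Finite (Interp D) := Finite.of_injective _ interp_sk_injective
  set P : Set (Interp D) := {s | ∃ σ, Rel G ω (induced σ s)} with hP
  have hmaps : f '' P ⊆ P := by
    rintro _ ⟨s, hs, rfl⟩
    exact meets_step hG hf ω s hs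
  have himg : f '' P = P :=
    Set.eq_of_subset_of_ncard_le hmaps
      (le_of_eq (Set.ncard_image_of_injective P hbij.injective).symm) (Set.toFinite P)
  have ht : t ∈ P := h
  rw [← himg] at ht
  obtain ⟨s₁, hs₁, hfs₁⟩ := ht
  have hft : f' t = s₁ := by rw [← hfs₁, hli s₁]
  rw [hft]
  exact hs₁

end Stmt9Aux

/-- the associated group of an admissible group is a group of
bijections of `S(P)`. -/
theorem stmt_9 {X Y : Type*} [Fintype X] [Fintype Y] (D : Y → Set X)
    (G : Set (BF (X ⊕ Y) → BF (X ⊕ Y))) (hG : AdmissibleGroup D G) :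
    ((id : Interp D → Interp D) ∈ Associated D G) ∧
    (∀ f ∈ Associated D G, ∀ f'' ∈ Associated D G, (f ∘ f'') ∈ Associated D G) ∧
    (∀ f ∈ Associated D G, ∀ f' : Interp D → Interp D,
      Function.LeftInverse f' f → Function.RightInverse f' f → f' ∈ Associated D G) ∧
    (∀ f ∈ Associated D G, Function.Bijective f) := by
  classical
  have hid : (id : Interp D → Interp D) ∈ Associated D G := by
    refine ⟨Function.bijective_id, fun s σ => ⟨id, hG.id_mem, ?_⟩⟩
    rfl
  have hcomp : ∀ f ∈ Associated D G, ∀ f'' ∈ Associated D G,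
      (f ∘ f'') ∈ Associated D G := by
    rintro f ⟨hfb, hf⟩ f'' ⟨hf''b, hf''⟩
    refine ⟨hfb.comp hf''b, fun s σ => ?_⟩
    obtain ⟨h, hh, he1⟩ := hf'' s σ
    obtain ⟨g₁, hg₁, he2⟩ := hf (f'' s) (pushX h σ)
    refine ⟨h ∘ g₁, hG.comp_mem h hh g₁ hg₁, ?_⟩
    rw [pushX_comp' (mem_presSat hG hh) (mem_varX hG hg₁) σ,
      pushA_comp' (mem_presSat hG hh) (induced σ s), ← he1]
    exact he2
  have hinv : ∀ f ∈ Associated D G, ∀ f' : Interp D → Interp D,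
      Function.LeftInverse f' f → Function.RightInverse f' f →
      f' ∈ Associated D G := by
    rintro f ⟨hfb, hf⟩ f' hli hri
    refine ⟨⟨hri.injective, hli.surjective⟩, fun t τ => ?_⟩
    obtain ⟨σ, hrel⟩ := inv_meets hG hfb hf hli t (induced τ t) ⟨τ, rel_refl hG _⟩
    obtain ⟨g, hg, he⟩ := hrel
    have hσ : σ = pushX g τ := by
      funext x
      have h2 := congrFun he (Sum.inl x)
      rw [pushA_inl' (mem_varX hG hg) (fun x => rfl) x] at h2
      exact h2.symm
    refine ⟨g, hg, ?_⟩
    rw [← hσ]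
    exact he.symm
  exact ⟨hid, hcomp, hinv, fun f hf => hf.1⟩


end DQBF
end

section
/- If G_syn is a syntactic symmetry group for a DQBF P.φ, then its associated group G_sem is a semantic symmetry group for P.φ; that is, [P.φ]_s = [P.φ]_{f(s)} for every f ∈ G_sem and every interpretation s ∈ S(P). -/
namespace DQBF

variable {X Y : Type*}

lemma pushA_id' {α : Type*} (σ : α → Bool) : pushA id σ = σ := rfl

lemma pushA_comp'_s10 {α : Type*} {k : BF α → BF α} (hk : PreservesSat k)
    (g : BF α → BF α) (ρ : α → Bool) :
    pushA (k ∘ g) ρ = pushA g (pushA k ρ) := by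
  funext v
  simpa [pushA, Function.comp] using hk (g (ev v)) ρ

lemma pushA_inv' {X Y : Type*} {D : Y → Set X} {g g' : BF (X ⊕ Y) → BF (X ⊕ Y)}
    (h : AdmissiblePair D g g') (ρ : X ⊕ Y → Bool) :
    pushA g' (pushA g ρ) = ρ := by
  funext v
  have := (h.presSat (g' (ev v)) ρ).symm
  rw [h.right_inv (ev v)] at this
  simpa [pushA, ev] using this

/-- if `G_syn` is a syntactic symmetry group for `P.φ`, then its
associated group is a semantic symmetry group for `P.φ`. -/
theorem stmt_10 {X Y : Type*} [Fintype X] [Fintype Y] (D : Y → Set X)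
    (G : Set (BF (X ⊕ Y) → BF (X ⊕ Y))) (hG : AdmissibleGroup D G)
    (φ : BF (X ⊕ Y))
    (hsym : ∀ g ∈ G, ∀ s : Interp D, Truth φ s ↔ Truth (g φ) s) :
    ∀ f ∈ Associated D G, ∀ s : Interp D, Truth φ s ↔ Truth φ (f s) := by
  have hFin : Finite (Interp D) := by
    apply Finite.of_injective (fun s : Interp D => s.sk)
    intro a b h
    cases a; cases b; simpa using h
  intro f hf s
  obtain ⟨hbij, hcond⟩ := hf
  constructor
  · -- `Truth φ s → Truth φ (f s)`
    intro hts τ'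
    set ρ₀ := induced τ' (f s) with hρ₀
    set SO : Set (Interp D) :=
      {t | ∃ (σ : X → Bool) (k : BF (X ⊕ Y) → BF (X ⊕ Y)),
        k ∈ G ∧ pushA k ρ₀ = induced σ t} with hSO
    have hmaps : Set.MapsTo f SO SO := by
      rintro t ⟨σ, k, hkG, hk⟩
      obtain ⟨g, hgG, hg⟩ := hcond t σ
      obtain ⟨k', hk'G, pairk⟩ := hG.inv_mem k hkG
      refine ⟨pushX g σ, k ∘ g, hG.comp_mem k hkG g hgG, ?_⟩
      rw [pushA_comp'_s10 pairk.presSat, hk, ← hg]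
    have hfs_mem : f s ∈ SO := ⟨τ', id, hG.id_mem, pushA_id' ρ₀⟩
    have hs_mem : s ∈ SO := by
      have hbijOn : Set.BijOn f SO SO :=
        ((Set.toFinite SO).injOn_iff_bijOn_of_mapsTo hmaps).mp hbij.injective.injOn
      obtain ⟨u, huSO, hu⟩ := hbijOn.surjOn hfs_mem
      rwa [hbij.injective hu] at huSO
    obtain ⟨σ, k, hkG, hk⟩ := hs_mem
    obtain ⟨k', hk'G, pairk⟩ := hG.inv_mem k hkG
    obtain ⟨k'', hk''G, pairk'⟩ := hG.inv_mem k' hk'G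
    have : φ ρ₀ = k' φ (induced σ s) := by
      rw [pairk'.presSat φ (induced σ s), ← hk, pushA_inv' pairk]
    rw [this]
    exact (hsym k' hk'G s).mp hts σ
  · -- `Truth φ (f s) → Truth φ s`
    intro htfs σ
    obtain ⟨g, hgG, hg⟩ := hcond s σ
    obtain ⟨g', hg'G, pairg⟩ := hG.inv_mem g hgG
    obtain ⟨g'', hg''G, pairg'⟩ := hG.inv_mem g' hg'G
    have : φ (induced σ s) = g' φ (induced (pushX g σ) (f s)) := by
      rw [pairg'.presSat φ _, hg, pushA_inv' pairg]
    rw [this]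
    exact (hsym g' hg'G (f s)).mp htfs (pushX g σ)

end DQBF
end

section
/- Let P be a prefix with existential variables Y = {y_1,…,y_k} and dependency sets D_1,…,D_k ⊆ X, let G_syn be an admissible group w.r.t. P with associated group G_sem, and let σ ∈ A(X), f ∈ G_sem, s ∈ S(P), and i ∈ {1,…,k} be such that: (1) for every j ∈ {1,…,k} with j < i or D_i ⊄ D_j, and every τ ∈ A(X) with τ|_{D_i} = σ|_{D_i}, one has [ev_{y_j}]_{τ_s} = [ev_{y_j}]_{τ_{f(s)}}; and (2) for every g ∈ G_syn and every τ ∈ A(X), τ|_{D_i} = σ|_{D_i} implies g(τ)|_{D_i} = τ|_{D_i}. Then there exists an interpretation s' ∈ S(P) such that for all j ∈ {1,…,k} and all τ ∈ A(X): [ev_{y_j}]_{τ_{s'}} = [ev_{y_j}]_{τ_s} whenever j < i, and also whenever j ≥ i and τ|_{D_i} ≠ σ|_{D_i}; and [ev_{y_j}]_{τ_{s'}} = [ev_{y_j}]_{τ_{f(s)}} whenever j ≥ i and τ|_{D_i} = σ|_{D_i}. Moreover, there exists h ∈ G_sem with h(s) = s'. -/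
namespace DQBF

variable {X Y : Type*}

/-- Lemma 6: exchanging the subtree of `s` rooted at `σ|_{D_i}`
with the corresponding subtree of `f(s)` yields an interpretation `s'` in the
same `G_sem`-orbit. -/
theorem stmt_12 {X : Type*} [Fintype X] [DecidableEq X] {k : ℕ} (D : Fin k → Set X)
    (G : Set (BF (X ⊕ Fin k) → BF (X ⊕ Fin k))) (hG : AdmissibleGroup D G)
    (f : Interp D → Interp D) (hf : f ∈ Associated D G)
    (σ : X → Bool) (s : Interp D) (i : Fin k)
    (h1 : ∀ j : Fin k, (j < i ∨ ¬ D i ⊆ D j) → ∀ τ : X → Bool,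
      (∀ x ∈ D i, τ x = σ x) →
      induced τ s (Sum.inr j) = induced τ (f s) (Sum.inr j))
    (h2 : ∀ g ∈ G, ∀ τ : X → Bool, (∀ x ∈ D i, τ x = σ x) →
      ∀ x ∈ D i, pushX g τ x = τ x) :
    ∃ s' : Interp D,
      (∀ (j : Fin k) (τ : X → Bool),
        (j < i → induced τ s' (Sum.inr j) = induced τ s (Sum.inr j)) ∧
        (i ≤ j → ¬ (∀ x ∈ D i, τ x = σ x) →
          induced τ s' (Sum.inr j) = induced τ s (Sum.inr j)) ∧
        (i ≤ j → (∀ x ∈ D i, τ x = σ x) →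
          induced τ s' (Sum.inr j) = induced τ (f s) (Sum.inr j))) ∧
      ∃ h ∈ Associated D G, h s = s' := by
  classical
  obtain ⟨hfbij, hfW⟩ := hf
  have presSat : ∀ g ∈ G, PreservesSat g := by
    intro g hg; obtain ⟨g', _, pair⟩ := hG.inv_mem g hg; exact pair.presSat
  have varX : ∀ g ∈ G, ∀ x : X, DependsOnlyOn (g (ev (Sum.inl x))) (Set.range Sum.inl) := by
    intro g hg; obtain ⟨g', _, pair⟩ := hG.inv_mem g hg; exact pair.varX
  have pushX_id : ∀ σ₀ : X → Bool, pushX (Y := Fin k) id σ₀ = σ₀ := fun _ => rfl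
  have pushA_id : ∀ ρ : (X ⊕ Fin k) → Bool, pushA id ρ = ρ := fun _ => rfl
  have pushA_comp : ∀ g₁ ∈ G, ∀ (g₂ : BF (X ⊕ Fin k) → BF (X ⊕ Fin k))
      (ρ : (X ⊕ Fin k) → Bool), pushA (g₁ ∘ g₂) ρ = pushA g₂ (pushA g₁ ρ) := by
    intro g₁ hg₁ g₂ ρ
    funext v
    exact presSat g₁ hg₁ (g₂ (ev v)) ρ
  have pushX_comp : ∀ g₁ ∈ G, ∀ g₂ ∈ G, ∀ σ₀ : X → Bool,
      pushX (g₁ ∘ g₂) σ₀ = pushX g₂ (pushX g₁ σ₀) := by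
    intro g₁ hg₁ g₂ hg₂ σ₀
    funext x
    have e1 : pushX (g₁ ∘ g₂) σ₀ x = g₂ (ev (Sum.inl x)) (pushA g₁ (extendX σ₀)) :=
      presSat g₁ hg₁ (g₂ (ev (Sum.inl x))) (extendX σ₀)
    rw [e1]
    exact varX g₂ hg₂ x _ _ (by rintro v ⟨x', rfl⟩; rfl)
  set W : Interp D → Interp D → Prop := fun t u => ∀ σ₀ : X → Bool, ∃ g ∈ G,
      induced (pushX g σ₀) u = pushA g (induced σ₀ t) with hWdef
  have Wrefl : ∀ t, W t t := by
    intro t σ₀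
    exact ⟨id, hG.id_mem, by rw [pushX_id, pushA_id]⟩
  have Wtrans : ∀ {t u v : Interp D}, W t u → W u v → W t v := by
    intro t u v htu huv σ₀
    obtain ⟨g₁, hg₁, e₁⟩ := htu σ₀
    obtain ⟨g₂, hg₂, e₂⟩ := huv (pushX g₁ σ₀)
    exact ⟨g₁ ∘ g₂, hG.comp_mem g₁ hg₁ g₂ hg₂, by
      rw [pushX_comp g₁ hg₁ g₂ hg₂, pushA_comp g₁ hg₁, ← e₁, e₂]⟩
  have Wf : ∀ t, W t (f t) := fun t => hfW t
  have Wn : ∀ (n : ℕ) (t : Interp D), W t (f^[n] t) := by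
    intro n
    induction n with
    | zero => intro t; exact Wrefl t
    | succ m ih =>
      intro t
      have : W t (f^[m] (f t)) := Wtrans (Wf t) (ih (f t))
      rwa [← Function.iterate_succ_apply] at this
  have finInterp : Finite (Interp D) := by
    have hinj : Function.Injective (fun t : Interp D => t.sk) := by
      intro a b h; cases a; cases b; simpa using h
    exact Finite.of_injective _ hinj
  have Wfs_s : W (f s) s := by
    obtain ⟨a, b, hab, he⟩ :=
      Finite.exists_ne_map_eq_of_infinite (fun n : ℕ => f^[n] s)
    have key : ∀ a b : ℕ, a < b → f^[a] s = f^[b] s → W (f s) s := by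
      intro a b hlt he
      have hb : f^[a] (f^[b - a] s) = f^[a] s := by
        rw [← Function.iterate_add_apply, Nat.add_sub_cancel' hlt.le, he]
      have hfix : f^[b - a] s = s := (hfbij.injective.iterate a) hb
      have hpos : 1 ≤ b - a := by omega
      have h := Wn (b - a - 1) (f s)
      rwa [← Function.iterate_succ_apply, show (b - a - 1).succ = b - a from by omega,
        hfix] at h
    rcases lt_or_gt_of_ne hab with h | h
    · exact key a b h he
    · exact key b a h he.symm
  -- construction of s'
  have hs2 : ∀ g ∈ G, ∀ τ : X → Bool, (∀ x ∈ D i, τ x = σ x) →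
      ∀ x ∈ D i, pushX g τ x = σ x := by
    intro g hg τ hτ x hx
    rw [h2 g hg τ hτ x hx]; exact hτ x hx
  have h1' : ∀ j : Fin k, (j < i ∨ ¬ D i ⊆ D j) → ∀ τ : X → Bool,
      (∀ x ∈ D i, τ x = σ x) → s.sk j τ = (f s).sk j τ :=
    fun j hj τ hτ => h1 j hj τ hτ
  have dep' : ∀ (j : Fin k) (σ₁ σ₂ : X → Bool), (∀ x ∈ D j, σ₁ x = σ₂ x) →
      (if i ≤ j ∧ ∀ x ∈ D i, σ₁ x = σ x then (f s).sk j σ₁ else s.sk j σ₁)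
        = (if i ≤ j ∧ ∀ x ∈ D i, σ₂ x = σ x then (f s).sk j σ₂ else s.sk j σ₂) := by
    intro j σ₁ σ₂ hagree
    by_cases hij : i ≤ j
    · by_cases hsub : D i ⊆ D j
      · have hiff : (∀ x ∈ D i, σ₁ x = σ x) ↔ (∀ x ∈ D i, σ₂ x = σ x) := by
          constructor <;> intro h x hx
          · rw [← hagree x (hsub hx)]; exact h x hx
          · rw [hagree x (hsub hx)]; exact h x hx
        by_cases ha : ∀ x ∈ D i, σ₁ x = σ x
        · rw [if_pos ⟨hij, ha⟩, if_pos ⟨hij, hiff.mp ha⟩]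
          exact (f s).dep j σ₁ σ₂ hagree
        · rw [if_neg (fun h => ha h.2), if_neg (fun h => ha (hiff.mpr h.2))]
          exact s.dep j σ₁ σ₂ hagree
      · have hkey : ∀ τ : X → Bool,
            (if i ≤ j ∧ ∀ x ∈ D i, τ x = σ x then (f s).sk j τ else s.sk j τ)
              = s.sk j τ := by
          intro τ
          split_ifs with h
          · exact (h1' j (Or.inr hsub) τ h.2).symm
          · rfl
        rw [hkey, hkey]
        exact s.dep j σ₁ σ₂ hagree
    · rw [if_neg (fun h => hij h.1), if_neg (fun h => hij h.1)]
      exact s.dep j σ₁ σ₂ hagree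
  set s' : Interp D :=
    ⟨fun j τ => if i ≤ j ∧ ∀ x ∈ D i, τ x = σ x then (f s).sk j τ else s.sk j τ, dep'⟩
    with hs'def
  have sk'_eq : ∀ (j : Fin k) (τ : X → Bool), s'.sk j τ =
      if i ≤ j ∧ ∀ x ∈ D i, τ x = σ x then (f s).sk j τ else s.sk j τ := fun _ _ => rfl
  have ind_inr : ∀ (t : Interp D) (τ : X → Bool) (j : Fin k),
      induced τ t (Sum.inr j) = t.sk j τ := fun _ _ _ => rfl
  have hs'_eq_fs : ∀ τ : X → Bool, (∀ x ∈ D i, τ x = σ x) →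
      induced τ s' = induced τ (f s) := by
    intro τ hτ
    funext v
    cases v with
    | inl x => rfl
    | inr j =>
      rw [ind_inr, ind_inr, sk'_eq]
      by_cases hij : i ≤ j
      · rw [if_pos ⟨hij, hτ⟩]
      · rw [if_neg (fun h => hij h.1)]
        exact h1' j (Or.inl (not_le.mp hij)) τ hτ
  have hs'_eq_s : ∀ τ : X → Bool, ¬ (∀ x ∈ D i, τ x = σ x) →
      induced τ s' = induced τ s := by
    intro τ hτ
    funext v
    cases v with
    | inl x => rfl
    | inr j =>
      rw [ind_inr, ind_inr, sk'_eq, if_neg (fun h => hτ h.2)]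
  have Wss' : W s s' := by
    intro σ₀
    by_cases ha : ∀ x ∈ D i, σ₀ x = σ x
    · obtain ⟨g, hg, e⟩ := hfW s σ₀
      refine ⟨g, hg, ?_⟩
      rw [hs'_eq_fs (pushX g σ₀) (hs2 g hg σ₀ ha), e]
    · exact ⟨id, hG.id_mem, by rw [pushX_id, pushA_id, hs'_eq_s σ₀ ha]⟩
  have Ws'fs : W s' (f s) := by
    intro σ₀
    by_cases ha : ∀ x ∈ D i, σ₀ x = σ x
    · exact ⟨id, hG.id_mem, by rw [pushX_id, pushA_id, hs'_eq_fs σ₀ ha]⟩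
    · obtain ⟨g, hg, e⟩ := hfW s σ₀
      refine ⟨g, hg, ?_⟩
      rw [hs'_eq_s σ₀ ha, e]
  have Ws's : W s' s := Wtrans Ws'fs Wfs_s
  refine ⟨s', ?_, ?_⟩
  · intro j τ
    refine ⟨?_, ?_, ?_⟩
    · intro hji
      rw [ind_inr, ind_inr, sk'_eq, if_neg (fun h => (not_le.mpr hji) h.1)]
    · intro _ hτ
      rw [ind_inr, ind_inr, sk'_eq, if_neg (fun h => hτ h.2)]
    · intro hij hτ
      rw [ind_inr, ind_inr, sk'_eq, if_pos ⟨hij, hτ⟩]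
  · refine ⟨Equiv.swap s s', ⟨(Equiv.swap s s').bijective, ?_⟩, Equiv.swap_apply_left s s'⟩
    intro t σ₀
    by_cases hts : t = s
    · subst hts
      rw [Equiv.swap_apply_left]
      exact Wss' σ₀
    · by_cases hts' : t = s'
      · subst hts'
        rw [Equiv.swap_apply_right]
        exact Ws's σ₀
      · rw [Equiv.swap_apply_of_ne_of_ne hts hts']
        exact Wrefl t σ₀


end DQBF
end

section
/- Let P.φ be a DQBF, let G_sem be a semantic symmetry group for P.φ, and let ψ ∈ BF(V) be a conjunctive symmetry breaker for G_sem. Then P.φ is true if and only if P.(φ ∧ ψ) is true, where φ ∧ ψ denotes the pointwise conjunction. -/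
namespace DQBF

variable {X Y : Type*}

/-- if `ψ` is a conjunctive symmetry breaker for a semantic symmetry
group of `P.φ`, then `P.φ` is true iff `P.(φ ∧ ψ)` is true. -/
theorem stmt_13 {X Y : Type*} [Fintype X] [Fintype Y] (D : Y → Set X)
    (φ ψ : BF (X ⊕ Y)) (Gsem : Set (Interp D → Interp D))
    (hgrp : BijGroup Gsem)
    (hsym : ∀ f ∈ Gsem, ∀ s : Interp D, Truth φ s ↔ Truth φ (f s))
    (hbrk : ConjSymBreaker Gsem ψ) :
    (∃ s : Interp D, Truth φ s) ↔
      (∃ s : Interp D, Truth (fun τ => φ τ && ψ τ) s) := by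
  constructor
  · rintro ⟨s, hs⟩
    obtain ⟨f, hf, hψ⟩ := hbrk s
    refine ⟨f s, fun σ => ?_⟩
    simp [(hsym f hf s).mp hs σ, hψ σ]
  · rintro ⟨s, hs⟩
    refine ⟨s, fun σ => ?_⟩
    have := hs σ
    simp only [Bool.and_eq_true] at this
    exact this.1

end DQBF
end

section
/- Let P be a prefix for X and Y with dependency sets (D_y)_{y∈Y}, let g be an element of an admissible group w.r.t. P, and let y_j ∈ Y and σ ∈ A(X) be such that σ(x) = [g(ev_x)]_σ for all x ∈ D_{y_j} and g(ev_{y_j}) depends only on {y_l ∈ Y : D_{y_l} = D_{y_j}}. Then [g(ev_{y_j})]_{σ_s} = [ev_{y_j}]_{σ_{g(s)}} for every interpretation s ∈ S(P). -/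
namespace DQBF

variable {X Y : Type*}

/-- A formula that is insensitive to every single-coordinate change is constant. -/
lemma flip_const {α : Type*} [Fintype α] (F : BF α)
    (h : ∀ v (τ τ' : α → Bool), (∀ w, w ≠ v → τ w = τ' w) → F τ = F τ') :
    ∀ τ τ', F τ = F τ' := by
  classical
  have key : ∀ n (τ τ' : α → Bool),
      (Finset.univ.filter (fun v => τ v ≠ τ' v)).card ≤ n → F τ = F τ' := by
    intro n
    induction n with
    | zero =>
      intro τ τ' h0
      have hτ : τ = τ' := by
        funext v
        by_contra hv
        have hm : v ∈ Finset.univ.filter (fun v => τ v ≠ τ' v) := by simp [hv]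
        have := Finset.card_pos.mpr ⟨v, hm⟩
        omega
      rw [hτ]
    | succ n ih =>
      intro τ τ' h0
      by_cases hd : τ = τ'
      · rw [hd]
      · have hex : ∃ v, τ v ≠ τ' v := by
          by_contra hc; push_neg at hc; exact hd (funext hc)
        obtain ⟨v, hv⟩ := hex
        set τ'' := Function.update τ v (τ' v) with hτ''
        have h1 : F τ = F τ'' :=
          h v τ τ'' (fun w hw => by simp [hτ'', Function.update_of_ne hw])
        rw [h1]
        apply ih
        have hmem : v ∈ Finset.univ.filter (fun w => τ w ≠ τ' w) := by simp [hv]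
        have hsub : Finset.univ.filter (fun w => τ'' w ≠ τ' w) ⊆
            (Finset.univ.filter (fun w => τ w ≠ τ' w)).erase v := by
          intro w hw
          simp only [Finset.mem_filter, Finset.mem_univ, true_and, ne_eq] at hw
          simp only [Finset.mem_erase, Finset.mem_filter, Finset.mem_univ, true_and, ne_eq]
          constructor
          · rintro rfl; exact hw (by simp [hτ''])
          · intro h2; apply hw
            rcases eq_or_ne w v with rfl | hne
            · simp [hτ'']
            · rw [hτ'', Function.update_of_ne hne]; exact h2
        have h3 := Finset.card_le_card hsub
        rw [Finset.card_erase_of_mem hmem] at h3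
        omega
  intro τ τ'
  exact key _ τ τ' le_rfl

/-- Lemma same-path: if `σ(x) = [g(ev_x)]_σ` on `D_{y_j}` and
`g(ev_{y_j})` depends only on `{y_l : D_{y_l} = D_{y_j}}`, then
`[g(ev_{y_j})]_{σ_s} = [ev_{y_j}]_{σ_{g(s)}}` for every interpretation `s`. -/
theorem stmt_15 {X Y : Type*} [Fintype X] [Fintype Y] (D : Y → Set X)
    (G : Set (BF (X ⊕ Y) → BF (X ⊕ Y))) (hG : AdmissibleGroup D G)
    (g g' : BF (X ⊕ Y) → BF (X ⊕ Y)) (hg : g ∈ G) (hg' : g' ∈ G)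
    (hpair : AdmissiblePair D g g')
    (gs : Interp D → Interp D)
    (hgs : ∀ (s : Interp D) (σ : X → Bool),
      induced σ (gs s) = pushA g (induced (pushX g' σ) s))
    (yj : Y) (σ : X → Bool)
    (hσ : ∀ x ∈ D yj, σ x = pushX g σ x)
    (hdep : DependsOnlyOn (g (ev (Sum.inr yj))) (Sum.inr '' {l : Y | D l = D yj})) :
    ∀ s : Interp D,
      g (ev (Sum.inr yj)) (induced σ s) = induced σ (gs s) (Sum.inr yj) := by
  classical
  intro s
  obtain ⟨g'', hg''G, hpair2⟩ := hG.inv_mem g' hg'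
  have hps : PreservesSat g := hpair.presSat
  have hps' : PreservesSat g' := hpair2.presSat
  -- pushA g' ∘ pushA g = id
  have hinv : ∀ τ : X ⊕ Y → Bool, pushA g' (pushA g τ) = τ := by
    intro τ
    funext v
    have h1 : g (g' (ev v)) τ = ev v τ := by rw [hpair.right_inv]
    rw [hps, hps'] at h1
    exact h1
  -- pushX g' (pushX g σ) = σ
  have hXinv : ∀ x : X, pushX g' (pushX g σ) x = σ x := by
    intro x
    have h2 : g' (ev (Sum.inl x)) (pushA g (extendX σ))
        = g' (ev (Sum.inl x)) (extendX (pushX g σ) : X ⊕ Y → Bool) := by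
      apply hpair2.varX
      rintro v ⟨x', rfl⟩
      rfl
    have h3 := congrFun (hinv (extendX σ)) (Sum.inl x)
    calc pushX g' (pushX g σ) x
        = g' (ev (Sum.inl x)) (extendX (pushX g σ) : X ⊕ Y → Bool) := rfl
      _ = g' (ev (Sum.inl x)) (pushA g (extendX σ)) := h2.symm
      _ = σ x := h3
  rw [hgs s σ]
  show g (ev (Sum.inr yj)) (induced σ s) = g (ev (Sum.inr yj)) (induced (pushX g' σ) s)
  by_cases hB : ∃ l, D l = D yj ∧ ∃ τ τ' : X ⊕ Y → Bool,
      (∀ v, v ≠ Sum.inr l → τ v = τ' v) ∧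
        g (ev (Sum.inr yj)) τ ≠ g (ev (Sum.inr yj)) τ'
  · -- the formula really depends on some y_l with D_l = D_{y_j}
    obtain ⟨l, hl, hdepl⟩ := hB
    have hτσ : ∀ x ∈ D yj, pushX g' σ x = σ x := by
      intro x hx
      have hDO : DependsOnlyOn (g' (ev (Sum.inl x))) (Sum.inl '' D yj) :=
        hpair.depCond yj x ⟨l, by rw [hl]; exact hx, hdepl⟩
      have h3 : g' (ev (Sum.inl x)) (extendX σ : X ⊕ Y → Bool)
          = g' (ev (Sum.inl x)) (extendX (pushX g σ) : X ⊕ Y → Bool) := by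
        apply hDO
        rintro v ⟨x', hx', rfl⟩
        simpa [extendX] using hσ x' hx'
      calc pushX g' σ x
          = g' (ev (Sum.inl x)) (extendX σ : X ⊕ Y → Bool) := rfl
        _ = g' (ev (Sum.inl x)) (extendX (pushX g σ) : X ⊕ Y → Bool) := h3
        _ = pushX g' (pushX g σ) x := rfl
        _ = σ x := hXinv x
    apply hdep
    rintro v ⟨l', hl', rfl⟩
    show s.sk l' σ = s.sk l' (pushX g' σ)
    apply s.dep
    intro x hx
    exact (hτσ x (by rw [← hl']; exact hx)).symm
  · -- the formula is constant
    push_neg at hB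
    apply flip_const (g (ev (Sum.inr yj)))
    intro v τ τ' hvv
    rcases v with x | l
    · exact hdep τ τ' (by rintro w ⟨l', _, rfl⟩; exact hvv _ (by simp))
    · by_cases hDl : D l = D yj
      · exact hB l hDl τ τ' hvv
      · apply hdep
        rintro w ⟨l', hl', rfl⟩
        apply hvv
        simp only [ne_eq, Sum.inr.injEq]
        rintro rfl
        exact hDl hl'

end DQBF
end

section
/- Let P be a topologically sorted prefix with Y = {y_1,…,y_k} and dependency sets D_1,…,D_k ⊆ X, and let g : BF(V) → BF(V) satisfy: for all i, j ∈ {1,…,k}, if D_i and D_j are incomparable and g(ev_{y_i}) ≠ ev_{y_i}, then g(ev_{y_j}) = ev_{y_j} and g(ev_x) = ev_x for every x ∈ D_j \ D_i. Then for every i ∈ {1,…,k} and every assignment τ ∈ A(V), the truth value of the implication ((∀ x ∈ D_i, τ(x) = [g(ev_x)]_τ) ∧ (∀ j < i, τ(y_j) = [g(ev_{y_j})]_τ)) → (τ(y_i) = true → [g(ev_{y_i})]_τ = true) equals the truth value of the same implication with D_i replaced by D_1 ∪ ⋯ ∪ D_i in the first conjunction. -/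
namespace DQBF

variable {X Y : Type*}

/-- in the symmetry-breaker subformula for `y_i`, the equivalence
block over `D_i` may be replaced by one over `D_1 ∪ ⋯ ∪ D_i`. -/
theorem stmt_17 {X : Type*} [Fintype X] [DecidableEq X] {k : ℕ} (D : Fin k → Set X)
    (hsorted : ∀ i j : Fin k, D i ⊂ D j → i < j)
    (g : BF (X ⊕ Fin k) → BF (X ⊕ Fin k))
    (c3 : ∀ i j : Fin k, (¬ D i ⊆ D j ∧ ¬ D j ⊆ D i) →
      g (ev (Sum.inr i)) ≠ ev (Sum.inr i) →
      g (ev (Sum.inr j)) = ev (Sum.inr j) ∧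
        ∀ x ∈ D j \ D i, g (ev (Sum.inl x)) = ev (Sum.inl x)) :
    ∀ (i : Fin k) (τ : X ⊕ Fin k → Bool),
      ((((∀ x ∈ D i, τ (Sum.inl x) = g (ev (Sum.inl x)) τ) ∧
          (∀ j : Fin k, j < i → τ (Sum.inr j) = g (ev (Sum.inr j)) τ)) →
          (τ (Sum.inr i) = true → g (ev (Sum.inr i)) τ = true))
        ↔
       (((∀ x ∈ ⋃ j ∈ {j : Fin k | j ≤ i}, D j, τ (Sum.inl x) = g (ev (Sum.inl x)) τ) ∧
          (∀ j : Fin k, j < i → τ (Sum.inr j) = g (ev (Sum.inr j)) τ)) →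
          (τ (Sum.inr i) = true → g (ev (Sum.inr i)) τ = true))) := by
  intro i τ
  constructor
  · intro h hU
    exact h ⟨fun x hx => hU.1 x (Set.mem_biUnion (le_refl i) hx), hU.2⟩
  · intro h hD hyi
    by_cases hgi : g (ev (Sum.inr i)) = ev (Sum.inr i)
    · rw [hgi]; exact hyi
    · apply h _ hyi
      refine ⟨?_, hD.2⟩
      intro x hx
      rcases Set.mem_iUnion₂.mp hx with ⟨j, hj, hxj⟩
      by_cases hxi : x ∈ D i
      · exact hD.1 x hxi
      · have hji : j ≠ i := fun h => hxi (h ▸ hxj)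
        have hji' : j < i := lt_of_le_of_ne hj hji
        have hinc : ¬ D i ⊆ D j ∧ ¬ D j ⊆ D i := by
          constructor
          · intro hsub
            have : D i ⊂ D j := ⟨hsub, fun h' => hxi (h' hxj)⟩
            exact absurd (hsorted i j this) (not_lt.mpr hji'.le)
          · intro hsub; exact hxi (hsub hxj)
        have := (c3 i j hinc hgi).2 x ⟨hxj, hxi⟩
        rw [this]; rfl

end DQBF
end
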